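/- Let q₁=(1,0,0), q₂=(1,1,0), q₃=(0,1,0), q₄=(0,1,1), q₅=(1,0,1), q₆=(0,0,1) in ℝ³. Then the intersection of the eight cones cone{q₂,q₃,q₅}, cone{q₁,q₃,q₅}, cone{q₂,q₃,q₆}, cone{q₂,q₄,q₆}, cone{q₁,q₄,q₆}, cone{q₁,q₄,q₅}, cone{q₁,q₃,q₆}, cone{q₂,q₄,q₅} equals the ray {t·(1,1,1) : t ∈ ℝ, t ≥ 0}. (This intersection is the nef cone of the non-projective ℚ-factorial small resolution X₈; it is not full-dimensional.) -/

import Mathlib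

def coneGen (S : Set (Fin 3 → ℝ)) : Set (Fin 3 → ℝ) :=
  {x | ∃ (n : ℕ) (c : Fin n → ℝ) (v : Fin n → (Fin 3 → ℝ)),
      (∀ i, 0 ≤ c i) ∧ (∀ i, v i ∈ S) ∧ x = ∑ i, c i • v i}

def q1 : Fin 3 → ℝ := ![1, 0, 0]
def q2 : Fin 3 → ℝ := ![1, 1, 0]
def q3 : Fin 3 → ℝ := ![0, 1, 0]
def q4 : Fin 3 → ℝ := ![0, 1, 1]
def q5 : Fin 3 → ℝ := ![1, 0, 1]
def q6 : Fin 3 → ℝ := ![0, 0, 1]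

lemma coneGen_ineq (a b c : ℝ) {S : Set (Fin 3 → ℝ)}
    (hS : ∀ v ∈ S, 0 ≤ a * v 0 + b * v 1 + c * v 2)
    {x : Fin 3 → ℝ} (hx : x ∈ coneGen S) : 0 ≤ a * x 0 + b * x 1 + c * x 2 := by
  obtain ⟨n, co, v, h0, hv, rfl⟩ := hx
  simp only [Finset.sum_apply, Pi.smul_apply, smul_eq_mul]
  rw [Finset.mul_sum, Finset.mul_sum, Finset.mul_sum, ← Finset.sum_add_distrib,
    ← Finset.sum_add_distrib]
  apply Finset.sum_nonneg
  intro i _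
  nlinarith [mul_nonneg (h0 i) (hS (v i) (hv i))]

lemma mem3 (a b c : Fin 3 → ℝ) (x y z : ℝ) (hx : 0 ≤ x) (hy : 0 ≤ y) (hz : 0 ≤ z) :
    x • a + y • b + z • c ∈ coneGen {a, b, c} := by
  refine ⟨3, ![x, y, z], ![a, b, c], ?_, ?_, ?_⟩
  · intro i; fin_cases i <;> simpa
  · intro i; fin_cases i <;> simp
  · simp [Fin.sum_univ_three]

theorem stmt14 :
    coneGen {q2, q3, q5} ∩ coneGen {q1, q3, q5} ∩ coneGen {q2, q3, q6} ∩
      coneGen {q2, q4, q6} ∩ coneGen {q1, q4, q6} ∩ coneGen {q1, q4, q5} ∩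
      coneGen {q1, q3, q6} ∩ coneGen {q2, q4, q5} =
    {x : Fin 3 → ℝ | ∃ t : ℝ, 0 ≤ t ∧ x = t • ![1, 1, 1]} := by
  ext x
  constructor
  · rintro ⟨⟨⟨⟨⟨⟨⟨h1, h2⟩, h3⟩, h4⟩, h5⟩, h6⟩, h7⟩, h8⟩
    -- x0 - x2 ≥ 0 from cone {q2,q3,q5}
    have i1 : 0 ≤ 1 * x 0 + 0 * x 1 + (-1) * x 2 := by
      apply coneGen_ineq _ _ _ _ h1
      rintro v (rfl | rfl | rfl) <;> norm_num [q2, q3, q5, Matrix.cons_val_two, Matrix.tail_cons, Matrix.head_cons]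
    -- x1 - x0 ≥ 0 from cone {q2,q3,q6}
    have i2 : 0 ≤ (-1) * x 0 + 1 * x 1 + 0 * x 2 := by
      apply coneGen_ineq _ _ _ _ h3
      rintro v (rfl | rfl | rfl) <;> norm_num [q2, q3, q6]
    -- x2 - x1 ≥ 0 from cone {q1,q4,q6}
    have i3 : 0 ≤ 0 * x 0 + (-1) * x 1 + 1 * x 2 := by
      apply coneGen_ineq _ _ _ _ h5
      rintro v (rfl | rfl | rfl) <;> norm_num [q1, q4, q6, Matrix.cons_val_two, Matrix.tail_cons, Matrix.head_cons]
    -- x1 ≥ 0 from cone {q1,q3,q6}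
    have i4 : 0 ≤ 0 * x 0 + 1 * x 1 + 0 * x 2 := by
      apply coneGen_ineq _ _ _ _ h7
      rintro v (rfl | rfl | rfl) <;> norm_num [q1, q3, q6]
    refine ⟨x 0, by linarith, ?_⟩
    funext j
    fin_cases j <;> simp <;> linarith
  · rintro ⟨t, ht, rfl⟩
    have key : ∀ a b c : Fin 3 → ℝ, ∀ x y z : ℝ, 0 ≤ x → 0 ≤ y → 0 ≤ z →
        x • a + y • b + z • c = t • ![1, 1, 1] → t • ![1, 1, 1] ∈ coneGen {a, b, c} := by
      intro a b c x y z hx hy hz h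
      rw [← h]; exact mem3 a b c x y z hx hy hz
    have e35 : (0:ℝ) • q2 + t • q3 + t • q5 = t • ![1, 1, 1] := by
      funext j; fin_cases j <;> simp [q2, q3, q5]
    refine ⟨⟨⟨⟨⟨⟨⟨?_, ?_⟩, ?_⟩, ?_⟩, ?_⟩, ?_⟩, ?_⟩, ?_⟩
    · exact key q2 q3 q5 0 t t le_rfl ht ht e35
    · exact key q1 q3 q5 0 t t le_rfl ht ht (by funext j; fin_cases j <;> simp [q1, q3, q5])
    · exact key q2 q3 q6 t 0 t ht le_rfl ht (by funext j; fin_cases j <;> simp [q2, q3, q6])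
    · exact key q2 q4 q6 t 0 t ht le_rfl ht (by funext j; fin_cases j <;> simp [q2, q4, q6])
    · exact key q1 q4 q6 t t 0 ht ht le_rfl (by funext j; fin_cases j <;> simp [q1, q4, q6])
    · exact key q1 q4 q5 t t 0 ht ht le_rfl (by funext j; fin_cases j <;> simp [q1, q4, q5])
    · exact key q1 q3 q6 t t t ht ht ht (by funext j; fin_cases j <;> simp [q1, q3, q6])
    · exact key q2 q4 q5 (t/2) (t/2) (t/2) (by linarith) (by linarith) (by linarith)
        (by funext j; fin_cases j <;> simp [q2, q4, q5])
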